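/- arXiv:1203.0273 — 4 statements merged into one kernel-verified Lean document; each statement's English description precedes it below -/
import Mathlib

section
/- If Λ is an ordered abelian group of finite rank and 𝔬 : ℝ → Λ is an order-preserving (injective) group homomorphism, then 𝔬 has a left inverse: there exists a group homomorphism φ : Λ → ℝ such that φ ∘ 𝔬 = id. -/
/-- `y` is infinitely larger than `x` in the ordered abelian group `Λ`. -/
def InfinitelyLarger {Λ : Type*} [AddCommGroup Λ] [LinearOrder Λ] [IsOrderedAddMonoid Λ] (x y : Λ) : Prop :=
  ∀ n : ℕ, n • |x| < |y|

/-- Archimedean equivalence of elements of an ordered abelian group. -/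
def ArchEquiv {Λ : Type*} [AddCommGroup Λ] [LinearOrder Λ] [IsOrderedAddMonoid Λ] (x y : Λ) : Prop :=
  ¬ InfinitelyLarger x y ∧ ¬ InfinitelyLarger y x

/-- An ordered abelian group has finite rank: the nonzero elements fall into
finitely many archimedean equivalence classes. -/
def FiniteRank (Λ : Type*) [AddCommGroup Λ] [LinearOrder Λ] [IsOrderedAddMonoid Λ] : Prop :=
  ∃ S : Finset Λ, ∀ x : Λ, x ≠ 0 → ∃ y ∈ S, ArchEquiv x y

/-- If `Λ` is an ordered abelian group of finite rank and `𝔬 : ℝ → Λ` is an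
order-preserving (hence injective) group homomorphism, then `𝔬` has a left inverse:
a group homomorphism `φ : Λ → ℝ` with `φ ∘ 𝔬 = id`. -/
theorem left_inverse_of_orderPreserving_real_embedding
    {Λ : Type*} [AddCommGroup Λ] [LinearOrder Λ] [IsOrderedAddMonoid Λ] (hΛ : FiniteRank Λ)
    (𝔬 : ℝ →+ Λ) (h𝔬 : StrictMono 𝔬) :
    ∃ φ : Λ →+ ℝ, ∀ x : ℝ, φ (𝔬 x) = x := by
  obtain ⟨φ, hφ⟩ := (Module.Baer.of_divisible ℝ).extension_property_addMonoidHom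
    𝔬 h𝔬.injective (AddMonoidHom.id ℝ)
  exact ⟨φ, fun x => congrArg (· x) hφ⟩
end

section
/- Let 𝔬 : ℝ → ℝⁿ be an order-preserving group homomorphism, where ℝⁿ carries the lexicographic order, and let a = 𝔬(1) with k = min { i | aᵢ > 0 }. Then for every t ∈ ℝ, the first k−1 coordinates of 𝔬(t) vanish, and for t > 0 the k-th coordinate of 𝔬(t) is strictly positive. -/
open Filter

/-- Let `𝔬 : ℝ → ℝⁿ` be an order-preserving group homomorphism where `ℝⁿ` carries the
lexicographic order, let `a = 𝔬 1`, and let `k` be the first index where `a` is positive.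
Then for every `t : ℝ`, the coordinates of `𝔬 t` before `k` vanish, and for `t > 0`
the `k`-th coordinate of `𝔬 t` is strictly positive. -/
theorem orderPreserving_real_to_lex_coords
    {n : ℕ} (𝔬 : ℝ →+ (Fin n → ℝ))
    (h𝔬 : ∀ s t : ℝ, s < t → toLex (𝔬 s) < toLex (𝔬 t))
    (k : Fin n) (hk : 0 < 𝔬 1 k) (hkmin : ∀ i : Fin n, i < k → ¬ 0 < 𝔬 1 i) :
    (∀ t : ℝ, ∀ i : Fin n, i < k → 𝔬 t i = 0) ∧
      (∀ t : ℝ, 0 < t → 0 < 𝔬 t k) := by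
  -- 𝔬 of a rational is that rational times 𝔬 1
  have hrat : ∀ q : ℚ, 𝔬 (q : ℝ) = (q : ℝ) • 𝔬 1 := by
    intro q
    have := map_ratCast_smul 𝔬 ℝ ℝ q (1 : ℝ)
    simpa using this
  -- coordinates of 𝔬 1 before k vanish
  have ha0 : ∀ i : Fin n, i < k → 𝔬 1 i = 0 := by
    have h01 : toLex (𝔬 0) < toLex (𝔬 1) := h𝔬 0 1 one_pos
    obtain ⟨j, hj1, hj2⟩ : ∃ j, (∀ m, m < j → 𝔬 0 m = 𝔬 1 m) ∧ 𝔬 0 j < 𝔬 1 j := h01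
    simp only [map_zero, Pi.zero_apply] at hj1 hj2
    have hkj : k ≤ j := le_of_not_gt fun h => hkmin j h hj2
    intro i hi
    exact ((hj1 i (lt_of_lt_of_le hi hkj))).symm
  have hqz : ∀ q : ℚ, ∀ m : Fin n, m < k → 𝔬 (q : ℝ) m = 0 := by
    intro q m hm
    rw [hrat q]
    simp [ha0 m hm]
  have key : ∀ t : ℝ, ∀ i : Fin n, i < k → 𝔬 t i = 0 := by
    intro t
    by_contra h
    push_neg at h
    obtain ⟨i0, hi0k, hi0ne⟩ := h
    obtain ⟨i, ⟨hik, hne⟩, hmin⟩ :=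
      (wellFounded_lt (α := Fin n)).has_min {i : Fin n | i < k ∧ 𝔬 t i ≠ 0}
        ⟨i0, hi0k, hi0ne⟩
    have IH : ∀ m : Fin n, m < i → 𝔬 t m = 0 := by
      intro m hm
      by_contra hm'
      exact hmin m ⟨hm.trans hik, hm'⟩ hm
    rcases lt_or_gt_of_ne hne with hneg | hpos
    · obtain ⟨q, hq⟩ := exists_rat_lt t
      have hlt := h𝔬 q t hq
      have hgt : toLex (𝔬 t) < toLex (𝔬 (q : ℝ)) := by
        refine ⟨i, fun m hm => ?_, ?_⟩
        · show 𝔬 t m = 𝔬 (q : ℝ) m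
          rw [IH m hm, hqz q m (hm.trans hik)]
        · show 𝔬 t i < 𝔬 (q : ℝ) i
          rw [hqz q i hik]; exact hneg
      exact lt_asymm hlt hgt
    · obtain ⟨q, hq⟩ := exists_rat_gt t
      have hlt := h𝔬 t q hq
      have hgt : toLex (𝔬 (q : ℝ)) < toLex (𝔬 t) := by
        refine ⟨i, fun m hm => ?_, ?_⟩
        · show 𝔬 (q : ℝ) m = 𝔬 t m
          rw [IH m hm, hqz q m (hm.trans hik)]
        · show 𝔬 (q : ℝ) i < 𝔬 t i
          rw [hqz q i hik]; exact hpos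
      exact lt_asymm hlt hgt
  refine ⟨key, ?_⟩
  intro t ht
  obtain ⟨q, hq0, hqt⟩ := exists_rat_btwn ht
  have hq0' : (0 : ℝ) < (q : ℝ) := hq0
  have hqk : 0 < 𝔬 (q : ℝ) k := by
    rw [hrat q]
    exact mul_pos hq0' hk
  have hlt := h𝔬 (q : ℝ) t hqt
  obtain ⟨j, hj1, hj2⟩ : ∃ j, (∀ m, m < j → 𝔬 (q : ℝ) m = 𝔬 t m) ∧ 𝔬 (q : ℝ) j < 𝔬 t j := hlt
  rcases lt_trichotomy j k with h | h | h
  · exfalso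
    have h1 : 𝔬 (q : ℝ) j = 0 := by rw [hrat q]; simp [ha0 j h]
    have h2 : 𝔬 t j = 0 := key t j h
    rw [h1, h2] at hj2
    exact lt_irrefl 0 hj2
  · subst h; exact hqk.trans hj2
  · rw [← hj1 k h]; exact hqk
end

section
/- Let Λ be an ordered abelian group of finite rank n and Λ' a subgroup contained in the minimal nontrivial convex subgroup of Λ. Given any order-preserving embedding F : Λ → ℝⁿ (lexicographic order), there exists an order-preserving embedding f : Λ' → ℝ such that F(g) = (0,…,0,f(g)) for all g ∈ Λ', i.e. F restricted to Λ' factors through the inclusion iₙ : ℝ → ℝⁿ as the last coordinate. -/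
/-- An ordered abelian group has rank exactly `n`. -/
def HasRank (Λ : Type*) [AddCommGroup Λ] [LinearOrder Λ] [IsOrderedAddMonoid Λ] (n : ℕ) : Prop :=
  ∃ S : Finset Λ, S.card = n ∧ (∀ x ∈ S, x ≠ 0) ∧
    (∀ x : Λ, x ≠ 0 → ∃ y ∈ S, ArchEquiv x y) ∧
    (∀ x ∈ S, ∀ y ∈ S, ArchEquiv x y → x = y)

/-- A convex subgroup of an ordered abelian group. -/
def IsConvexSubgroup {Λ : Type*} [AddCommGroup Λ] [LinearOrder Λ] [IsOrderedAddMonoid Λ] (H : AddSubgroup Λ) : Prop :=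
  ∀ g ∈ H, ∀ k ∈ H, ∀ h : Λ, g < h → h < k → h ∈ H

/-- Leading index: the least index where `v` is nonzero (junk value `⟨0, hn⟩` if `v = 0`). -/
noncomputable def levAux {n : ℕ} (hn : 0 < n) (v : Fin n → ℝ) : Fin n :=
  if h : (Finset.univ.filter fun i => v i ≠ 0).Nonempty
    then (Finset.univ.filter fun i => v i ≠ 0).min' h else ⟨0, hn⟩

theorem levAux_spec {n : ℕ} (hn : 0 < n) {v : Fin n → ℝ} (hv : ∃ i, v i ≠ 0) :
    v (levAux hn v) ≠ 0 ∧ ∀ j, j < levAux hn v → v j = 0 := by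
  classical
  obtain ⟨i, hi⟩ := hv
  have hne : (Finset.univ.filter fun i => v i ≠ 0).Nonempty :=
    ⟨i, by simp [hi]⟩
  rw [levAux, dif_pos hne]
  constructor
  · have := Finset.min'_mem _ hne
    simpa using this
  · intro j hj
    by_contra hj0
    have hjm : j ∈ Finset.univ.filter fun i => v i ≠ 0 := by simp [hj0]
    exact absurd (Finset.min'_le _ _ hjm) (not_le.mpr hj)

theorem levAux_neg {n : ℕ} (hn : 0 < n) (v : Fin n → ℝ) :
    levAux hn (-v) = levAux hn v := by
  classical
  simp only [levAux, Pi.neg_apply, neg_ne_zero]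

/-- Let `Λ` be an ordered abelian group of finite rank `n` and `Λ'` a subgroup contained
in the minimal nontrivial convex subgroup `C` of `Λ`.  Given any order-preserving
embedding `F : Λ → ℝⁿ` (lexicographic order), there is an order-preserving embedding
`f : Λ' → ℝ` such that `F g = (0, …, 0, f g)` for all `g ∈ Λ'`. -/
theorem restriction_to_min_convex_factors_through_last_coord
    {Λ : Type*} [AddCommGroup Λ] [LinearOrder Λ] [IsOrderedAddMonoid Λ] {n : ℕ} (hn : 0 < n)
    (hrank : HasRank Λ n)
    (C : AddSubgroup Λ) (hCconv : IsConvexSubgroup C) (hCnontriv : C ≠ ⊥)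
    (hCmin : ∀ D : AddSubgroup Λ, IsConvexSubgroup D → D ≠ ⊥ → C ≤ D)
    (Λ' : AddSubgroup Λ) (hΛ' : Λ' ≤ C)
    (F : Λ →+ (Fin n → ℝ)) (hF : ∀ a b : Λ, a < b → toLex (F a) < toLex (F b)) :
    ∃ f : Λ' →+ ℝ, StrictMono f ∧
      ∀ g : Λ', F (g : Λ) = fun i : Fin n => if (i : ℕ) + 1 = n then f g else 0 := by
  classical
  obtain ⟨S, hScard, hSne, hSall, hSuniq⟩ := hrank
  have hlex : ∀ x y : Fin n → ℝ,
      (toLex x < toLex y ↔ ∃ i, (∀ j, j < i → x j = y j) ∧ x i < y i) :=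
    fun x y => Iff.rfl
  -- F reflects the order
  have hFlt : ∀ a b : Λ, a < b ↔ toLex (F a) < toLex (F b) := by
    intro a b
    refine ⟨hF a b, fun h => ?_⟩
    by_contra hle
    push_neg at hle
    rcases eq_or_lt_of_le hle with rfl | h'
    · exact lt_irrefl _ h
    · exact lt_asymm h (hF b a h')
  -- nonzero elements have nonzero image
  have hFne : ∀ x : Λ, x ≠ 0 → ∃ i, F x i ≠ 0 := by
    intro x hx
    by_contra h
    push_neg at h
    rcases lt_trichotomy x 0 with h' | h' | h'
    · have := hF x 0 h'
      rw [hlex] at this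
      obtain ⟨i, -, hi⟩ := this
      rw [h i, map_zero] at hi
      exact lt_irrefl _ hi
    · exact hx h'
    · have := hF 0 x h'
      rw [hlex] at this
      obtain ⟨i, -, hi⟩ := this
      rw [h i, map_zero] at hi
      exact lt_irrefl _ hi
  set L : Λ → Fin n := fun x => levAux hn (F x) with hL
  -- the leading coefficient of a positive element is positive
  have hpos : ∀ x : Λ, 0 < x → 0 < F x (L x) := by
    intro x hx
    have hx0 : x ≠ 0 := ne_of_gt hx
    obtain ⟨hsp, hmin⟩ := levAux_spec hn (hFne x hx0)
    have := hF 0 x hx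
    rw [hlex] at this
    obtain ⟨i, hbelow, hi⟩ := this
    rw [map_zero] at hi hbelow
    have hine : F x i ≠ 0 := ne_of_gt (by simpa using hi)
    -- L x = i
    rcases lt_trichotomy (L x) i with h' | h' | h'
    · exact absurd ((hbelow _ h').symm) hsp
    · rw [hL]; simpa [← h'] using hi
    · exact absurd (hmin i h') hine
  -- leading data for |x|
  have habs : ∀ x : Λ, x ≠ 0 →
      (0 < F |x| (L x)) ∧ (∀ j, j < L x → F |x| j = 0) := by
    intro x hx
    have hxabs : 0 < |x| := abs_pos.mpr hx
    have hLabs : L |x| = L x := by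
      rcases abs_choice x with h | h
      · rw [h]
      · rw [hL]; simp only [h, map_neg]; exact levAux_neg hn (F x)
    have h1 := hpos |x| hxabs
    rw [hLabs] at h1
    have h2 := (levAux_spec hn (hFne |x| (ne_of_gt hxabs))).2
    refine ⟨h1, fun j hj => ?_⟩
    rw [← hLabs] at hj
    exact h2 j hj
  -- two elements with the same leading index are not infinitely far apart
  have hsame : ∀ x y : Λ, x ≠ 0 → y ≠ 0 → L x = L y → ¬ InfinitelyLarger x y := by
    intro x y hx hy hxy hinf
    obtain ⟨ha, hax⟩ := habs x hx
    obtain ⟨hb, hby⟩ := habs y hy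
    rw [← hxy] at hb hby
    set i := L x
    set a := F |x| i
    set b := F |y| i
    obtain ⟨m, hm⟩ := exists_nat_gt (b / a)
    have hmb : b < (m : ℝ) * a := by
      rw [div_lt_iff₀ ha] at hm
      exact hm
    have : |y| < m • |x| := by
      rw [hFlt, hlex]
      refine ⟨i, fun j hj => ?_, ?_⟩
      · rw [hby j hj, map_nsmul]
        simp [hax j hj]
      · rw [map_nsmul]
        simpa [nsmul_eq_mul] using hmb
    exact absurd (hinf m) (asymm this)
  -- Λ has an element whose leading index is the last one
  have last_mem : ∃ s : Λ, s ≠ 0 ∧ L s = ⟨n - 1, by omega⟩ := by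
    have hinj : Set.InjOn L S := by
      intro s hs t ht hst
      have hs0 := hSne s hs
      have ht0 := hSne t ht
      exact hSuniq s hs t ht ⟨hsame s t hs0 ht0 hst, hsame t s ht0 hs0 hst.symm⟩
    have hcard : (S.image L).card = n := by
      rw [Finset.card_image_of_injOn hinj, hScard]
    have huniv : S.image L = Finset.univ :=
      Finset.eq_univ_of_card _ (by rw [hcard, Fintype.card_fin])
    have : (⟨n - 1, by omega⟩ : Fin n) ∈ S.image L :=
      Finset.eq_univ_iff_forall.mp huniv _
    obtain ⟨s, hs, hLs⟩ := Finset.mem_image.mp this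
    exact ⟨s, hSne s hs, hLs⟩
  obtain ⟨s, hs0, hLs⟩ := last_mem
  -- the subgroup D of elements supported on the last coordinate
  set D : AddSubgroup Λ :=
    { carrier := {x | ∀ j : Fin n, (j : ℕ) + 1 ≠ n → F x j = 0}
      zero_mem' := fun j _ => by rw [map_zero]; rfl
      add_mem' := fun {a b} ha hb j hj => by rw [map_add]; simp [ha j hj, hb j hj]
      neg_mem' := fun {a} ha j hj => by rw [map_neg]; simp [ha j hj] } with hD
  have hmemD : ∀ x : Λ, x ∈ D ↔ ∀ j : Fin n, (j : ℕ) + 1 ≠ n → F x j = 0 := fun x => Iff.rfl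
  -- key: indices below the leading index argument
  have hlt_last : ∀ j : Fin n, (j : ℕ) + 1 ≠ n → (j : ℕ) < n - 1 := by
    intro j hj
    have := j.isLt
    omega
  have hsD : s ∈ D := by
    rw [hmemD]
    intro j hj
    have hjlt : j < L s := by
      rw [hLs, Fin.lt_def]
      exact hlt_last j hj
    exact (levAux_spec hn (hFne s hs0)).2 j hjlt
  have hDbot : D ≠ ⊥ := by
    intro hbot
    rw [AddSubgroup.eq_bot_iff_forall] at hbot
    exact hs0 (hbot s hsD)
  have hDconv : IsConvexSubgroup D := by
    intro g hg k hk h hgh hhk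
    rw [hmemD] at hg hk ⊢
    intro j hj
    by_contra hhj
    have hh0 : h ≠ 0 := by
      intro h0
      rw [h0, map_zero] at hhj
      exact hhj rfl
    obtain ⟨hsp, hmin⟩ := levAux_spec hn (hFne h hh0)
    have hLle : L h ≤ j := by
      by_contra hle
      push_neg at hle
      exact hhj (hmin j hle)
    have hLlast : ((L h : Fin n) : ℕ) + 1 ≠ n := by
      have hjval : (j : ℕ) < n - 1 := hlt_last j hj
      have : ((L h : Fin n) : ℕ) ≤ (j : ℕ) := hLle
      omega
    rcases lt_trichotomy (F h (L h)) 0 with hc | hc | hc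
    · -- then h < g, contradiction
      have : h < g := by
        rw [hFlt, hlex]
        refine ⟨L h, fun j' hj' => ?_, ?_⟩
        · have hj'lt : (j' : ℕ) + 1 ≠ n := by
            have h1 : (j' : ℕ) < ((L h : Fin n) : ℕ) := hj'
            have h2 : ((L h : Fin n) : ℕ) ≤ (j : ℕ) := hLle
            have := hlt_last j hj
            omega
          rw [hmin j' hj', hg j' hj'lt]
        · rw [hg (L h) hLlast]; exact hc
      exact absurd hgh (asymm this)
    · exact hsp hc
    · -- then k < h, contradiction
      have : k < h := by
        rw [hFlt, hlex]
        refine ⟨L h, fun j' hj' => ?_, ?_⟩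
        · have hj'lt : (j' : ℕ) + 1 ≠ n := by
            have h1 : (j' : ℕ) < ((L h : Fin n) : ℕ) := hj'
            have h2 : ((L h : Fin n) : ℕ) ≤ (j : ℕ) := hLle
            have := hlt_last j hj
            omega
          rw [hmin j' hj', hk j' hj'lt]
        · rw [hk (L h) hLlast]; exact hc
      exact absurd hhk (asymm this)
  have hΛD : ∀ g : Λ', (g : Λ) ∈ D := fun g => hCmin D hDconv hDbot (hΛ' g.2)
  -- define f
  set last : Fin n := ⟨n - 1, by omega⟩ with hlast
  refine ⟨(Pi.evalAddMonoidHom (fun _ : Fin n => ℝ) last).comp (F.comp Λ'.subtype), ?_, ?_⟩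
  · intro g h hgh
    have hgh' : (g : Λ) < h := hgh
    have := (hFlt _ _).mp hgh'
    rw [hlex] at this
    obtain ⟨i, hbelow, hi⟩ := this
    have hi_last : i = last := by
      by_contra hne
      have hival : (i : ℕ) + 1 ≠ n := by
        intro hc
        apply hne
        apply Fin.ext
        simp [hlast]
        omega
      rw [(hmemD _).mp (hΛD g) i hival, (hmemD _).mp (hΛD h) i hival] at hi
      exact lt_irrefl _ hi
    rw [hi_last] at hi
    simpa using hi
  · intro g
    funext i
    by_cases hi : (i : ℕ) + 1 = n
    · have : i = last := by
        apply Fin.ext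
        simp [hlast]
        omega
      rw [if_pos hi, this]
      rfl
    · simp only [hi, if_false]
      exact (hmemD _).mp (hΛD g) i hi
end

section
/- Let a group G act by isometries on a Λ-tree T with translation length function ℓ, and let Λ' ⊂ Λ be a convex subgroup with ℓ(G) ⊆ Λ'. Then the quotient T₀ = T/~, where x ~ y iff d(x,y) ∈ Λ', is a (Λ/Λ')-tree, and the induced action of G on T₀ has identically zero translation length function. -/
/-- A `Λ`-metric on `T`. -/
def IsLambdaMetric {Λ T : Type*} [AddCommGroup Λ] [LinearOrder Λ] [IsOrderedAddMonoid Λ] (d : T → T → Λ) : Prop :=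
  (∀ x y : T, 0 ≤ d x y) ∧ (∀ x y : T, d x y = 0 ↔ x = y) ∧
    (∀ x y : T, d x y = d y x) ∧ ∀ x y z : T, d x z ≤ d x y + d y z

/-- `s` is a geodesic segment from `x` to `y` for the `Λ`-metric `d`:
an isometric image of the interval `[0, d x y] ⊆ Λ`. -/
def IsSegmentBetween {Λ T : Type*} [AddCommGroup Λ] [LinearOrder Λ] [IsOrderedAddMonoid Λ]
    (d : T → T → Λ) (x y : T) (s : Set T) : Prop :=
  ∃ f : Λ → T, f 0 = x ∧ f (d x y) = y ∧ s = f '' Set.Icc 0 (d x y) ∧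
    ∀ u ∈ Set.Icc (0 : Λ) (d x y), ∀ v ∈ Set.Icc (0 : Λ) (d x y),
      d (f u) (f v) = |u - v|

/-- `(T, d)` is a `Λ`-tree: a geodesic `Λ`-metric space in which two segments
meeting only at a common endpoint concatenate to a segment, and the intersection
of two segments with a common endpoint is a segment. -/
def IsLambdaTree {Λ T : Type*} [AddCommGroup Λ] [LinearOrder Λ] [IsOrderedAddMonoid Λ] (d : T → T → Λ) : Prop :=
  IsLambdaMetric d ∧
  (∀ x y : T, ∃ s : Set T, IsSegmentBetween d x y s) ∧
  (∀ (x y z : T) (s₁ s₂ : Set T), IsSegmentBetween d x y s₁ → IsSegmentBetween d y z s₂ →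
    s₁ ∩ s₂ = {y} → IsSegmentBetween d x z (s₁ ∪ s₂)) ∧
  (∀ (x y z : T) (s₁ s₂ : Set T), IsSegmentBetween d x y s₁ → IsSegmentBetween d x z s₂ →
    ∃ (w : T) (s : Set T), IsSegmentBetween d x w s ∧ s₁ ∩ s₂ = s)

section Aux

variable {Λ T : Type*} [AddCommGroup Λ] [LinearOrder Λ] [IsOrderedAddMonoid Λ] {d : T → T → Λ}

/-- distances along a segment parametrization -/
lemma param_dist {f : Λ → T} {D : Λ} (hD : 0 ≤ D)
    (hiso : ∀ u ∈ Set.Icc (0:Λ) D, ∀ v ∈ Set.Icc (0:Λ) D, d (f u) (f v) = |u - v|)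
    {u : Λ} (hu : u ∈ Set.Icc (0:Λ) D) :
    d (f 0) (f u) = u ∧ d (f u) (f D) = D - u := by
  constructor
  · rw [hiso 0 ⟨le_refl 0, hD⟩ u hu, zero_sub, abs_neg, abs_of_nonneg hu.1]
  · rw [hiso u hu D ⟨hD, le_refl D⟩, abs_of_nonpos (sub_nonpos.mpr hu.2), neg_sub]

/-- every point of a segment is between the endpoints -/
lemma seg_between (hmet : IsLambdaMetric d) {x y : T} {s : Set T}
    (h : IsSegmentBetween d x y s) : ∀ p ∈ s, d x p + d p y = d x y := by
  obtain ⟨f, hf0, hfD, hse, hiso⟩ := h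
  intro p hp
  rw [hse] at hp
  obtain ⟨u, hu, rfl⟩ := hp
  have h1 := param_dist (hmet.1 x y) hiso hu
  rw [hf0] at h1; rw [hfD] at h1
  rw [h1.1, h1.2]; abel

/-- a segment contains a (unique) point at each admissible distance from `x` -/
lemma seg_exists_at (hmet : IsLambdaMetric d) {x y : T} {s : Set T}
    (h : IsSegmentBetween d x y s) {t : Λ} (ht0 : 0 ≤ t) (ht1 : t ≤ d x y) :
    ∃ p ∈ s, d x p = t := by
  obtain ⟨f, hf0, hfD, hse, hiso⟩ := h
  refine ⟨f t, by rw [hse]; exact ⟨t, ⟨ht0, ht1⟩, rfl⟩, ?_⟩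
  have h1 := param_dist (hmet.1 x y) hiso (⟨ht0, ht1⟩ : t ∈ Set.Icc 0 (d x y))
  rw [hf0] at h1; exact h1.1

/-- reverse a segment -/
lemma seg_reverse (hmet : IsLambdaMetric d) {x y : T} {s : Set T}
    (h : IsSegmentBetween d x y s) : IsSegmentBetween d y x s := by
  obtain ⟨f, hf0, hfD, hse, hiso⟩ := h
  have hsymm : d y x = d x y := hmet.2.2.1 y x
  refine ⟨fun u => f (d x y - u), by simpa using hfD, by rw [hsymm]; simpa using hf0, ?_, ?_⟩
  · rw [hse, hsymm]
    ext p
    constructor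
    · rintro ⟨u, hu, rfl⟩
      exact ⟨d x y - u, ⟨sub_nonneg.mpr hu.2, by simpa using hu.1⟩, by simp⟩
    · rintro ⟨u, hu, rfl⟩
      exact ⟨d x y - u, ⟨sub_nonneg.mpr hu.2, by simpa using hu.1⟩, rfl⟩
  · rw [hsymm]
    intro u hu v hv
    rw [hiso _ ⟨sub_nonneg.mpr hu.2, by simpa using hu.1⟩ _ ⟨sub_nonneg.mpr hv.2, by simpa using hv.1⟩]
    rw [show d x y - u - (d x y - v) = -(u - v) by abel, abs_neg]

end Aux

section TreeLemmas

variable {Λ T : Type*} [AddCommGroup Λ] [LinearOrder Λ] [IsOrderedAddMonoid Λ] {d : T → T → Λ}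

/-- every Λ-tree has medians -/
lemma tree_median (hT : IsLambdaTree d) (x y z : T) :
    ∃ w, d x w + d w y = d x y ∧ d x w + d w z = d x z ∧ d y w + d w z = d y z := by
  have hmet := hT.1
  have hpos := hmet.1
  have hsym := hmet.2.2.1
  obtain ⟨s₁, hs₁⟩ := hT.2.1 x y
  obtain ⟨s₂, hs₂⟩ := hT.2.1 x z
  obtain ⟨w, σ, hσ, hcap⟩ := hT.2.2.2 x y z s₁ s₂ hs₁ hs₂
  have hwσ : w ∈ σ := by
    obtain ⟨h, hh0, hhD, hσe, hhiso⟩ := hσ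
    rw [hσe]; exact ⟨d x w, ⟨hpos x w, le_refl _⟩, hhD⟩
  have hw12 : w ∈ s₁ ∩ s₂ := hcap.symm ▸ hwσ
  have h1 : d x w + d w y = d x y := seg_between hmet hs₁ w hw12.1
  have h2 : d x w + d w z = d x z := seg_between hmet hs₂ w hw12.2
  obtain ⟨f, hf0, hfD, hs₁e, hfiso⟩ := hs₁
  obtain ⟨g, hg0, hgD, hs₂e, hgiso⟩ := hs₂
  set α := d x w with hα
  have hα0 : 0 ≤ α := hpos x w
  have hα1 : α ≤ d x y := by rw [← h1]; exact le_add_of_nonneg_right (hpos w y)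
  have hα2 : α ≤ d x z := by rw [← h2]; exact le_add_of_nonneg_right (hpos w z)
  have hwf : f α = w := by
    have hmem := hw12.1; rw [hs₁e] at hmem
    obtain ⟨u, hu, huw⟩ := hmem
    have hdu := (param_dist (hpos x y) hfiso hu).1
    rw [hf0, huw] at hdu
    rw [← huw]; congr 1
  have hwg : g α = w := by
    have hmem := hw12.2; rw [hs₂e] at hmem
    obtain ⟨u, hu, huw⟩ := hmem
    have hdu := (param_dist (hpos x z) hgiso hu).1
    rw [hg0, huw] at hdu
    rw [← huw]; congr 1
  have hdwy : d w y = d x y - α := by rw [← h1]; abel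
  have hdyw : d y w = d x y - α := by rw [hsym y w, hdwy]
  have hdwz : d w z = d x z - α := by rw [← h2]; abel
  -- membership helpers
  have hmem1 : ∀ {u : Λ}, u ∈ Set.Icc (0:Λ) (d x y - α) → d x y - u ∈ Set.Icc 0 (d x y) :=
    fun hu => ⟨sub_nonneg.mpr (le_trans hu.2 (sub_le_self _ hα0)), sub_le_self _ hu.1⟩
  have hmem2 : ∀ {u : Λ}, u ∈ Set.Icc (0:Λ) (d x z - α) → u + α ∈ Set.Icc 0 (d x z) :=
    fun hu => ⟨add_nonneg hu.1 hα0, by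
      have := add_le_add_left hu.2 α; rwa [sub_add_cancel] at this⟩
  have hseg1 : IsSegmentBetween d y w ((fun u => f (d x y - u)) '' Set.Icc 0 (d y w)) := by
    refine ⟨fun u => f (d x y - u), by simp [hfD], ?_, rfl, ?_⟩
    · show f (d x y - d y w) = w
      rw [hdyw, sub_sub_cancel, hwf]
    · intro u hu v hv
      rw [hdyw] at hu hv
      rw [hfiso _ (hmem1 hu) _ (hmem1 hv),
        show d x y - u - (d x y - v) = -(u - v) by abel, abs_neg]
  have hseg2 : IsSegmentBetween d w z ((fun u => g (u + α)) '' Set.Icc 0 (d w z)) := by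
    refine ⟨fun u => g (u + α), by simpa using hwg, ?_, rfl, ?_⟩
    · show g (d w z + α) = z
      rw [hdwz, sub_add_cancel, hgD]
    · intro u hu v hv
      rw [hdwz] at hu hv
      rw [hgiso _ (hmem2 hu) _ (hmem2 hv), show u + α - (v + α) = u - v by abel]
  have hint : ((fun u => f (d x y - u)) '' Set.Icc 0 (d y w)) ∩
      ((fun u => g (u + α)) '' Set.Icc 0 (d w z)) = {w} := by
    ext p
    simp only [Set.mem_inter_iff, Set.mem_singleton_iff]
    constructor
    · rintro ⟨⟨u, hu, hpu⟩, ⟨v, hv, hpv⟩⟩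
      rw [hdyw] at hu; rw [hdwz] at hv
      have hdxp : d x p = d x y - u := by
        rw [← hpu]
        have := (param_dist (hpos x y) hfiso (hmem1 hu)).1
        rwa [hf0] at this
      have hge : α ≤ d x p := by rw [hdxp]; exact le_sub_comm.mp hu.2
      have hp1 : p ∈ s₁ := by rw [hs₁e]; exact ⟨d x y - u, hmem1 hu, hpu⟩
      have hp2 : p ∈ s₂ := by rw [hs₂e]; exact ⟨v + α, hmem2 hv, hpv⟩
      have hpσ : p ∈ σ := by rw [← hcap]; exact ⟨hp1, hp2⟩
      obtain ⟨h, hh0, hhD, hσe, hhiso⟩ := hσ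
      rw [hσe] at hpσ
      obtain ⟨r, hr, hpr⟩ := hpσ
      have hdr : d x p = r := by
        rw [← hpr]
        have := (param_dist (hpos x w) hhiso hr).1
        rwa [hh0] at this
      have hle : d x p ≤ α := hdr ▸ hr.2
      have heq : d x y - u = α := by rw [← hdxp]; exact le_antisymm hle hge
      rw [← hpu]; show f (d x y - u) = w; rw [heq, hwf]
    · intro hp
      rw [hp]
      constructor
      · exact ⟨d y w, ⟨hpos y w, le_refl _⟩, by
          show f (d x y - d y w) = w; rw [hdyw, sub_sub_cancel, hwf]⟩
      · exact ⟨0, ⟨le_refl _, hpos w z⟩, by simpa using hwg⟩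
  have hcon := hT.2.2.1 y w z _ _ hseg1 hseg2 hint
  have hww : w ∈ ((fun u => f (d x y - u)) '' Set.Icc 0 (d y w)) ∪
      ((fun u => g (u + α)) '' Set.Icc 0 (d w z)) :=
    Or.inr ⟨0, ⟨le_refl _, hpos w z⟩, by simpa using hwg⟩
  exact ⟨w, h1, h2, seg_between hmet hcon w hww⟩


/-- endpoints lie on the segment -/
lemma seg_endpoints {Λ T : Type*} [AddCommGroup Λ] [LinearOrder Λ] [IsOrderedAddMonoid Λ] {d : T → T → Λ}
    {x y : T} {s : Set T} (h0 : 0 ≤ d x y) (h : IsSegmentBetween d x y s) :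
    x ∈ s ∧ y ∈ s := by
  obtain ⟨f, hf0, hfD, hse, _⟩ := h
  exact ⟨by rw [hse]; exact ⟨0, ⟨le_refl _, h0⟩, hf0⟩,
    by rw [hse]; exact ⟨d x y, ⟨h0, le_refl _⟩, hfD⟩⟩

/-- between-points at equal distance coincide in a Λ-tree -/
lemma tree_btw_unique {Λ T : Type*} [AddCommGroup Λ] [LinearOrder Λ] [IsOrderedAddMonoid Λ] {d : T → T → Λ}
    (hT : IsLambdaTree d) {x y p q : T}
    (hp : d x p + d p y = d x y) (hq : d x q + d q y = d x y) (he : d x p = d x q) : p = q := by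
  have hmet := hT.1
  have hpos := hmet.1
  have hzero := hmet.2.1
  have hsym := hmet.2.2.1
  have htri := hmet.2.2.2
  have through : ∀ r : T, d x r + d r y = d x y → ∃ S : Set T, IsSegmentBetween d x y S ∧
      ∀ ζ ∈ S, d x ζ = d x r → ζ = r := by
    intro r hr
    obtain ⟨sa, hsa⟩ := hT.2.1 x r
    obtain ⟨sb, hsb⟩ := hT.2.1 r y
    have hint : sa ∩ sb = {r} := by
      ext ζ
      simp only [Set.mem_inter_iff, Set.mem_singleton_iff]
      constructor
      · rintro ⟨h1, h2⟩
        have b1 := seg_between hmet hsa ζ h1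
        have b2 := seg_between hmet hsb ζ h2
        have tr := htri x ζ y
        have hsum : d x ζ + d ζ y + (d ζ r + d ζ r) = d x y := by
          rw [← hr, ← b1, ← b2, hsym r ζ]; abel
        have hle : d x ζ + d ζ y + (d ζ r + d ζ r) ≤ d x ζ + d ζ y := hsum ▸ tr
        have h2le : d ζ r + d ζ r ≤ 0 := (add_le_iff_nonpos_right _).mp hle
        have : d ζ r ≤ 0 := le_trans (le_add_of_nonneg_left (hpos ζ r)) h2le
        exact (hzero ζ r).mp (le_antisymm this (hpos ζ r))
      · intro h
        rw [h]
        exact ⟨(seg_endpoints (hpos x r) hsa).2, (seg_endpoints (hpos r y) hsb).1⟩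
    have hS := hT.2.2.1 x r y sa sb hsa hsb hint
    refine ⟨sa ∪ sb, hS, ?_⟩
    intro ζ hζ hd
    rcases hζ with h1 | h2
    · have b1 := seg_between hmet hsa ζ h1
      rw [hd] at b1
      exact (hzero ζ r).mp ((add_eq_left).mp b1)
    · have b2 := seg_between hmet hsb ζ h2
      have htr := htri x ζ y
      rw [hd] at htr
      rw [← hr] at htr
      have h1le : d r y ≤ d ζ y := (add_le_add_iff_left _).mp htr
      have h2le : d r ζ + d ζ y ≤ d ζ y := b2 ▸ h1le
      have : d r ζ ≤ 0 := add_le_iff_nonpos_left.mp h2le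
      have := (hzero r ζ).mp (le_antisymm this (hpos r ζ))
      exact this.symm
  obtain ⟨Sp, hSp, hPp⟩ := through p hp
  obtain ⟨Sq, hSq, hPq⟩ := through q hq
  obtain ⟨w, σ, hσ, hcap⟩ := hT.2.2.2 x y y Sp Sq hSp hSq
  have hyS : y ∈ Sp ∩ Sq := ⟨(seg_endpoints (hpos x y) hSp).2, (seg_endpoints (hpos x y) hSq).2⟩
  have hyσ : y ∈ σ := hcap ▸ hyS
  obtain ⟨h, hh0, hhD, hσe, hhiso⟩ := hσ
  have hwle : d x w ≤ d x y := by
    have hwσ : w ∈ σ := by rw [hσe]; exact ⟨d x w, ⟨hpos x w, le_refl _⟩, hhD⟩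
    have hw12 : w ∈ Sp ∩ Sq := hcap.symm ▸ hwσ
    have := seg_between hmet hSp w hw12.1
    rw [← this]; exact le_add_of_nonneg_right (hpos w y)
  have hyw : d x y ≤ d x w := by
    rw [hσe] at hyσ
    obtain ⟨r, hr, hry⟩ := hyσ
    have hd := (param_dist (hpos x w) hhiso hr).1
    rw [hh0, hry] at hd
    rw [hd]; exact hr.2
  have hwy : d x w = d x y := le_antisymm hwle hyw
  have ht0 : 0 ≤ d x p := hpos x p
  have ht1 : d x p ≤ d x w := by
    rw [hwy, ← hp]; exact le_add_of_nonneg_right (hpos p y)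
  have hζσ : h (d x p) ∈ σ := by rw [hσe]; exact ⟨d x p, ⟨ht0, ht1⟩, rfl⟩
  have hζd : d x (h (d x p)) = d x p := by
    have := (param_dist (hpos x w) hhiso (⟨ht0, ht1⟩ : d x p ∈ Set.Icc 0 (d x w))).1
    rwa [hh0] at this
  have hζSpq : h (d x p) ∈ Sp ∩ Sq := hcap.symm ▸ hζσ
  have e1 : h (d x p) = p := hPp _ hζSpq.1 hζd
  have e2 : h (d x p) = q := hPq _ hζSpq.2 (by rw [hζd, he])
  exact e1 ▸ e2

end TreeLemmas

section Ingredients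

variable {Λ T : Type*} [AddCommGroup Λ] [LinearOrder Λ] [IsOrderedAddMonoid Λ] {d : T → T → Λ}

/-- with between-uniqueness, every segment equals the set of between-points -/
lemma seg_eq_btw (hmet : IsLambdaMetric d)
    (huniq : ∀ x y p q : T, d x p + d p y = d x y → d x q + d q y = d x y → d x p = d x q → p = q)
    {x y : T} {s : Set T} (h : IsSegmentBetween d x y s) :
    s = {p | d x p + d p y = d x y} := by
  ext p
  simp only [Set.mem_setOf_eq]
  constructor
  · exact fun hp => seg_between hmet h p hp
  · intro hp
    have ht0 : 0 ≤ d x p := hmet.1 x p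
    have ht1 : d x p ≤ d x y := by rw [← hp]; exact le_add_of_nonneg_right (hmet.1 p y)
    obtain ⟨p', hp's, hp'd⟩ := seg_exists_at hmet h ht0 ht1
    have hb' := seg_between hmet h p' hp's
    have heq := huniq x y p p' hp hb' hp'd.symm
    rw [heq]; exact hp's

lemma btw_lemma (hmet : IsLambdaMetric d)
    (hgeo : ∀ x y : T, ∃ s, IsSegmentBetween d x y s)
    (hmed : ∀ x y z : T, ∃ w, d x w + d w y = d x y ∧ d x w + d w z = d x z ∧
      d y w + d w z = d y z)
    (huniq : ∀ x y p q : T, d x p + d p y = d x y → d x q + d q y = d x y → d x p = d x q → p = q)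
    {x y z p : T} (hy : d x y + d y z = d x z) (hp : d x p + d p z = d x z)
    (hle : d x p ≤ d x y) : d x p + d p y = d x y := by
  have htri := hmet.2.2.2
  obtain ⟨m, hm1, hm2, hm3⟩ := hmed p y z
  have e1 : d x p + d p m = d x m := by
    refine le_antisymm ?_ (htri x p m)
    have t' : d x p + d p m + d m z ≤ d x m + d m z := by
      calc d x p + d p m + d m z = d x p + d p z := by rw [← hm2]; abel
        _ = d x z := hp
        _ ≤ d x m + d m z := htri x m z
    exact le_of_add_le_add_right t'
  have e2 : d x y + d y m = d x m := by
    refine le_antisymm ?_ (htri x y m)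
    have t' : d x y + d y m + d m z ≤ d x m + d m z := by
      calc d x y + d y m + d m z = d x y + d y z := by rw [← hm3]; abel
        _ = d x z := hy
        _ ≤ d x m + d m z := htri x m z
    exact le_of_add_le_add_right t'
  obtain ⟨s, hs⟩ := hgeo x y
  have ht0 : 0 ≤ d x p := hmet.1 x p
  obtain ⟨q', hq's, hq'd⟩ := seg_exists_at hmet hs ht0 hle
  have hq'b : d x q' + d q' y = d x y := seg_between hmet hs q' hq's
  have e3 : d x q' + d q' m = d x m := by
    refine le_antisymm ?_ (htri x q' m)
    calc d x q' + d q' m ≤ d x q' + (d q' y + d y m) := add_le_add_right (htri q' y m) _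
      _ = (d x q' + d q' y) + d y m := by abel
      _ = d x y + d y m := by rw [hq'b]
      _ = d x m := e2
  have heq := huniq x m p q' e1 e3 hq'd.symm
  rw [heq]; exact hq'b

lemma tree_of_ingredients (hmet : IsLambdaMetric d)
    (hgeo : ∀ x y : T, ∃ s, IsSegmentBetween d x y s)
    (hmed : ∀ x y z : T, ∃ w, d x w + d w y = d x y ∧ d x w + d w z = d x z ∧
      d y w + d w z = d y z)
    (huniq : ∀ x y p q : T, d x p + d p y = d x y → d x q + d q y = d x y → d x p = d x q → p = q) :
    IsLambdaTree d := by
  have htri := hmet.2.2.2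
  have hpos := hmet.1
  have hsym := hmet.2.2.1
  refine ⟨hmet, hgeo, ?_, ?_⟩
  · -- concatenation axiom
    intro x y z s₁ s₂ h₁ h₂ hint
    have hs₁ : s₁ = {p | d x p + d p y = d x y} := seg_eq_btw hmet huniq h₁
    have hs₂ : s₂ = {p | d y p + d p z = d y z} := seg_eq_btw hmet huniq h₂
    obtain ⟨w, hw1, hw2, hw3⟩ := hmed x y z
    have hwmem : w ∈ s₁ ∩ s₂ := ⟨by rw [hs₁]; exact hw1, by rw [hs₂]; exact hw3⟩
    have hwy : w = y := by rw [hint] at hwmem; exact hwmem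
    subst hwy
    obtain ⟨s, hs⟩ := hgeo x z
    have hsb : s = {p | d x p + d p z = d x z} := seg_eq_btw hmet huniq hs
    have hun : s₁ ∪ s₂ = {p | d x p + d p z = d x z} := by
      rw [hs₁, hs₂]
      ext p
      simp only [Set.mem_union, Set.mem_setOf_eq]
      constructor
      · rintro (h | h)
        · refine le_antisymm ?_ (htri x p z)
          calc d x p + d p z ≤ d x p + (d p w + d w z) := add_le_add_right (htri p w z) _
            _ = (d x p + d p w) + d w z := by abel
            _ = d x w + d w z := by rw [h]
            _ = d x z := hw2
        · refine le_antisymm ?_ (htri x p z)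
          calc d x p + d p z ≤ (d x w + d w p) + d p z := add_le_add_left (htri x w p) _
            _ = d x w + (d w p + d p z) := by abel
            _ = d x w + d w z := by rw [h]
            _ = d x z := hw2
      · intro h
        rcases le_total (d x p) (d x w) with hle | hle
        · left; exact btw_lemma hmet hgeo hmed huniq hw2 h hle
        · right
          have hy' : d z w + d w x = d z x := by
            rw [hsym z w, hsym w x, hsym z x, ← hw2]; abel
          have hp' : d z p + d p x = d z x := by
            rw [hsym z p, hsym p x, hsym z x, ← h]; abel
          have hle' : d z p ≤ d z w := by
            have e1 : d z p = d x z - d x p := by rw [hsym z p, ← h]; abel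
            have e2 : d z w = d x z - d x w := by rw [hsym z w, ← hw2]; abel
            rw [e1, e2]; exact sub_le_sub_left hle _
          have hres := btw_lemma hmet hgeo hmed huniq hy' hp' hle'
          rw [hsym w p, add_comm]
          rwa [hsym z p, hsym z w] at hres
    rw [hun, ← hsb]; exact hs
  · -- intersection axiom
    intro x y z s₁ s₂ h₁ h₂
    have hs₁ : s₁ = {p | d x p + d p y = d x y} := seg_eq_btw hmet huniq h₁
    have hs₂ : s₂ = {p | d x p + d p z = d x z} := seg_eq_btw hmet huniq h₂
    obtain ⟨w, hw1, hw2, hw3⟩ := hmed x y z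
    obtain ⟨s, hs⟩ := hgeo x w
    refine ⟨w, s, hs, ?_⟩
    have hsb : s = {p | d x p + d p w = d x w} := seg_eq_btw hmet huniq hs
    rw [hs₁, hs₂, hsb]
    ext p
    simp only [Set.mem_inter_iff, Set.mem_setOf_eq]
    constructor
    · rintro ⟨hpy, hpz⟩
      have hle : d x p ≤ d x w := by
        have e1 : d y p = d x y - d x p := by rw [hsym y p, ← hpy]; abel
        have e2 : d p z = d x z - d x p := by rw [← hpz]; abel
        have t2 : d y w + d w z ≤ (d x w + d y w) + (d x w + d w z)
            - d x p - d x p := by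
          calc d y w + d w z = d y z := hw3
            _ ≤ d y p + d p z := htri y p z
            _ = (d x y - d x p) + (d x z - d x p) := by rw [e1, e2]
            _ = (d x w + d y w) + (d x w + d w z) - d x p - d x p := by
                rw [← hw1, ← hw2, hsym w y]; abel
        have t3 : d x p + d x p ≤ d x w + d x w := by
          have h' : (d y w + d w z) + (d x p + d x p) ≤
              (d y w + d w z) + (d x w + d x w) := by
            calc (d y w + d w z) + (d x p + d x p)
                ≤ ((d x w + d y w) + (d x w + d w z) - d x p - d x p) + (d x p + d x p) :=
                  add_le_add_left t2 _
              _ = (d y w + d w z) + (d x w + d x w) := by abel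
          exact (add_le_add_iff_left _).mp h'
        by_contra hc
        push_neg at hc
        exact absurd t3 (not_le.mpr (add_lt_add hc hc))
      exact btw_lemma hmet hgeo hmed huniq hw1 hpy hle
    · intro hpw
      constructor
      · refine le_antisymm ?_ (htri x p y)
        calc d x p + d p y ≤ d x p + (d p w + d w y) := add_le_add_right (htri p w y) _
          _ = (d x p + d p w) + d w y := by abel
          _ = d x w + d w y := by rw [hpw]
          _ = d x y := hw1
      · refine le_antisymm ?_ (htri x p z)
        calc d x p + d p z ≤ d x p + (d p w + d w z) := add_le_add_right (htri p w z) _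
          _ = (d x p + d p w) + d w z := by abel
          _ = d x w + d w z := by rw [hpw]
          _ = d x z := hw2

end Ingredients

/-- Let a group `G` act by isometries on a `Λ`-tree `T` with translation length function `ℓ`,
and let `Λ' ⊆ Λ` be a convex subgroup with `ℓ(G) ⊆ Λ'`.  Let `M` (together with the
monotone surjection `π : Λ → M` with kernel `Λ'`) realize the ordered quotient group `Λ/Λ'`.
Then the quotient `T₀ = T/~`, where `x ~ y` iff `d x y ∈ Λ'`, carries a `(Λ/Λ')`-valued
distance `d₀` with `d₀ ⟦x⟧ ⟦y⟧ = π (d x y)` making it a `(Λ/Λ')`-tree, and the induced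
action of `G` on `T₀` is by isometries with identically zero translation length function. -/
theorem quotient_tree_of_convex_subgroup
    {Λ T M G : Type*} [AddCommGroup Λ] [LinearOrder Λ] [IsOrderedAddMonoid Λ] [AddCommGroup M] [LinearOrder M] [IsOrderedAddMonoid M] [Group G]
    (d : T → T → Λ) (hT : IsLambdaTree d)
    (act : G → T → T)
    (hact_one : ∀ x : T, act 1 x = x)
    (hact_mul : ∀ (g h : G) (x : T), act (g * h) x = act g (act h x))
    (hact_iso : ∀ (g : G) (x y : T), d (act g x) (act g y) = d x y)
    (ℓ : G → Λ)
    (hℓ : ∀ g : G, (∀ x : T, ℓ g ≤ d x (act g x)) ∧ ∃ x : T, d x (act g x) = ℓ g)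
    (Λ' : AddSubgroup Λ) (hconv : IsConvexSubgroup Λ')
    (hℓΛ' : ∀ g : G, ℓ g ∈ Λ')
    (π : Λ →+ M) (hπ_mono : Monotone π) (hπ_surj : Function.Surjective π)
    (hπ_ker : ∀ x : Λ, π x = 0 ↔ x ∈ Λ') :
    ∃ d₀ : Quot (fun x y : T => d x y ∈ Λ') → Quot (fun x y : T => d x y ∈ Λ') → M,
      (∀ x y : T, d₀ (Quot.mk _ x) (Quot.mk _ y) = π (d x y)) ∧
      IsLambdaTree d₀ ∧
      ∃ act₀ : G → Quot (fun x y : T => d x y ∈ Λ') → Quot (fun x y : T => d x y ∈ Λ'),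
        (∀ (g : G) (x : T), act₀ g (Quot.mk _ x) = Quot.mk _ (act g x)) ∧
        (∀ (g : G) (q q' : Quot (fun x y : T => d x y ∈ Λ')),
          d₀ (act₀ g q) (act₀ g q') = d₀ q q') ∧
        ∀ g : G, ∃ q : Quot (fun x y : T => d x y ∈ Λ'), d₀ q (act₀ g q) = 0 := by
  
  classical
  have hmet := hT.1
  have hpos := hmet.1
  have hzero := hmet.2.1
  have hsym := hmet.2.2.1
  have htri := hmet.2.2.2
  set R : T → T → Prop := fun x y : T => d x y ∈ Λ' with hR
  -- convexity consequences
  have habs_mem : ∀ a b : Λ, b ∈ Λ' → |a| ≤ b → a ∈ Λ' := by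
    intro a b hb hab
    have h1 : -b ≤ a := neg_le_of_abs_le hab
    have h2 : a ≤ b := le_of_abs_le hab
    rcases eq_or_lt_of_le h1 with he | hlt1
    · rw [← he]; exact neg_mem hb
    rcases eq_or_lt_of_le h2 with he | hlt2
    · rw [he]; exact hb
    exact hconv (-b) (neg_mem hb) b hb a hlt1 hlt2
  have half_mem : ∀ a : Λ, 0 ≤ a → a + a ∈ Λ' → a ∈ Λ' := by
    intro a ha h2
    exact habs_mem a (a + a) h2 (by rw [abs_of_nonneg ha]; exact le_add_of_nonneg_left ha)
  have hker : ∀ a b : Λ, π a = π b ↔ a - b ∈ Λ' := by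
    intro a b
    rw [← hπ_ker, map_sub, sub_eq_zero]
  have hπabs : ∀ a : Λ, π |a| = |π a| := by
    intro a
    rw [abs_eq_max_neg, hπ_mono.map_max, map_neg, ← abs_eq_max_neg]
  -- d₀ is well-defined
  have hwd : ∀ x y y' : T, R y y' → π (d x y) = π (d x y') := by
    intro x y y' hy
    rw [hker]
    refine habs_mem _ _ hy ?_
    rw [abs_sub_le_iff]
    constructor
    · rw [sub_le_iff_le_add, add_comm]
      have h := htri x y' y
      rwa [hsym y' y] at h
    · rw [sub_le_iff_le_add, add_comm]
      exact htri x y y'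
  set d₀ : Quot R → Quot R → M :=
    Quot.lift₂ (fun x y => π (d x y))
      (fun a b₁ b₂ hb => hwd a b₁ b₂ hb)
      (fun a₁ a₂ b ha => by
        show π (d a₁ b) = π (d a₂ b)
        rw [hsym a₁ b, hsym a₂ b]; exact hwd b a₁ a₂ ha) with hd₀def
  have hd₀ : ∀ x y : T, d₀ (Quot.mk R x) (Quot.mk R y) = π (d x y) := fun _ _ => rfl
  -- the quotient metric
  have hmet₀ : IsLambdaMetric d₀ := by
    refine ⟨?_, ?_, ?_, ?_⟩
    · intro q q'
      induction q using Quot.ind with | _ x => ?_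
      induction q' using Quot.ind with | _ y => ?_
      rw [hd₀]
      have h := hπ_mono (hpos x y)
      rwa [map_zero] at h
    · intro q q'
      induction q using Quot.ind with | _ x => ?_
      induction q' using Quot.ind with | _ y => ?_
      constructor
      · intro h
        rw [hd₀] at h
        exact Quot.sound ((hπ_ker (d x y)).mp h)
      · intro h
        rw [h, hd₀, (hzero y y).mpr rfl, map_zero]
    · intro q q'
      induction q using Quot.ind with | _ x => ?_
      induction q' using Quot.ind with | _ y => ?_
      rw [hd₀, hd₀, hsym x y]
    · intro q q' q''
      induction q using Quot.ind with | _ x => ?_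
      induction q' using Quot.ind with | _ y => ?_
      induction q'' using Quot.ind with | _ z => ?_
      rw [hd₀, hd₀, hd₀, ← map_add]
      exact hπ_mono (htri x y z)
  -- geodesics in the quotient
  have hsec : ∀ m : M, π (Classical.choose (hπ_surj m)) = m :=
    fun m => Classical.choose_spec (hπ_surj m)
  have hgeo₀ : ∀ q q' : Quot R, ∃ s, IsSegmentBetween d₀ q q' s := by
    intro q q'
    induction q using Quot.ind with | _ x => ?_
    induction q' using Quot.ind with | _ y => ?_
    obtain ⟨s, f, hf0, hfD, hse, hiso⟩ := hT.2.1 x y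
    have hD0 : 0 ≤ d x y := hpos x y
    have hπD0 : (0 : M) ≤ π (d x y) := by
      have h := hπ_mono hD0; rwa [map_zero] at h
    set c : M → Λ := fun m => max 0 (min (Classical.choose (hπ_surj m)) (d x y)) with hc
    have hcmem : ∀ m : M, c m ∈ Set.Icc 0 (d x y) :=
      fun m => ⟨le_max_left _ _, max_le hD0 (min_le_right _ _)⟩
    have hcπ : ∀ m ∈ Set.Icc (0 : M) (π (d x y)), π (c m) = m := by
      intro m hm
      show π (max 0 (min (Classical.choose (hπ_surj m)) (d x y))) = m
      rw [hπ_mono.map_max, hπ_mono.map_min, map_zero, hsec, min_eq_left hm.2,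
        max_eq_right hm.1]
    set F : M → Quot R := fun m => Quot.mk R (f (c m)) with hF
    have hQ : d₀ (Quot.mk R x) (Quot.mk R y) = π (d x y) := hd₀ x y
    refine ⟨F '' Set.Icc 0 (d₀ (Quot.mk R x) (Quot.mk R y)), F, ?_, ?_, rfl, ?_⟩
    · show Quot.mk R (f (c 0)) = Quot.mk R x
      apply Quot.sound
      show d (f (c 0)) x ∈ Λ'
      have h1 := (param_dist hD0 hiso (hcmem 0)).1
      rw [hf0] at h1
      rw [hsym (f (c 0)) x, h1, ← hπ_ker]
      exact hcπ 0 ⟨le_refl _, hπD0⟩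
    · rw [hQ]
      show Quot.mk R (f (c (π (d x y)))) = Quot.mk R y
      apply Quot.sound
      show d (f (c (π (d x y)))) y ∈ Λ'
      have h1 := (param_dist hD0 hiso (hcmem (π (d x y)))).2
      rw [hfD] at h1
      rw [h1, ← hπ_ker, map_sub, hcπ (π (d x y)) ⟨hπD0, le_refl _⟩, sub_self]
    · intro u hu v hv
      rw [hQ] at hu hv
      show d₀ (Quot.mk R (f (c u))) (Quot.mk R (f (c v))) = |u - v|
      rw [hd₀, hiso _ (hcmem u) _ (hcmem v), hπabs, map_sub, hcπ u hu, hcπ v hv]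
  -- medians in the quotient
  have hmed₀ : ∀ q q' q'' : Quot R, ∃ w, d₀ q w + d₀ w q' = d₀ q q' ∧
      d₀ q w + d₀ w q'' = d₀ q q'' ∧ d₀ q' w + d₀ w q'' = d₀ q' q'' := by
    intro q q' q''
    induction q using Quot.ind with | _ x => ?_
    induction q' using Quot.ind with | _ y => ?_
    induction q'' using Quot.ind with | _ z => ?_
    obtain ⟨w, h1, h2, h3⟩ := tree_median hT x y z
    exact ⟨Quot.mk R w,
      by rw [hd₀, hd₀, hd₀, ← map_add, h1],
      by rw [hd₀, hd₀, hd₀, ← map_add, h2],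
      by rw [hd₀, hd₀, hd₀, ← map_add, h3]⟩
  -- between-uniqueness in the quotient
  have huniq₀ : ∀ X Y P Q : Quot R, d₀ X P + d₀ P Y = d₀ X Y →
      d₀ X Q + d₀ Q Y = d₀ X Y → d₀ X P = d₀ X Q → P = Q := by
    intro X Y P Q
    induction X using Quot.ind with | _ x => ?_
    induction Y using Quot.ind with | _ y => ?_
    induction P using Quot.ind with | _ p => ?_
    induction Q using Quot.ind with | _ q => ?_
    intro hp hq he
    simp only [hd₀] at hp hq he
    have project : ∀ r : T, π (d x r) + π (d r y) = π (d x y) →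
        ∃ m, d x m + d m y = d x y ∧ d r m ∈ Λ' ∧ π (d x m) = π (d x r) := by
      intro r hr
      obtain ⟨m, hm1, hm2, hm3⟩ := tree_median hT x r y
      have hsum : d r m + d r m = (d x r + d r y) - d x y := by
        rw [← hm1, ← hm3, ← hm2, hsym m r]; abel
      have hmem : d r m ∈ Λ' := by
        apply half_mem _ (hpos r m)
        rw [hsum, ← hπ_ker, map_sub, map_add, hr, sub_self]
      refine ⟨m, hm2, hmem, ?_⟩
      rw [hker]
      have hsub : d x m - d x r = -(d m r) := by rw [← hm1]; abel
      rw [hsub]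
      refine neg_mem ?_
      rwa [hsym m r]
    obtain ⟨mp, hmp1, hmp2, hmp3⟩ := project p hp
    obtain ⟨mq, hmq1, hmq2, hmq3⟩ := project q hq
    have hdd : d x mq - d x mp ∈ Λ' := by
      rw [← hπ_ker, map_sub, hmp3, hmq3, he, sub_self]
    obtain ⟨s, hs⟩ := hT.2.1 x y
    obtain ⟨f, hf0, hfD, hse, hiso⟩ := hs
    have memIcc : ∀ r : T, d x r + d r y = d x y → d x r ∈ Set.Icc 0 (d x y) := by
      intro r hr
      exact ⟨hpos x r, by rw [← hr]; exact le_add_of_nonneg_right (hpos r y)⟩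
    have key : ∀ r : T, d x r + d r y = d x y → r = f (d x r) := by
      intro r hr
      have h1 := param_dist (hpos x y) hiso (memIcc r hr)
      rw [hf0] at h1
      rw [hfD] at h1
      have hb : d x (f (d x r)) + d (f (d x r)) y = d x y := by rw [h1.1, h1.2]; abel
      exact tree_btw_unique hT hr hb h1.1.symm
    have hpm := key mp hmp1
    have hqm := key mq hmq1
    have hmm : d mp mq ∈ Λ' := by
      have h2 := hiso (d x mp) (memIcc mp hmp1) (d x mq) (memIcc mq hmq1)
      rw [← hpm, ← hqm] at h2
      rw [h2]
      have hc : d x mp - d x mq ∈ Λ' := by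
        have h3 := neg_mem hdd
        rwa [neg_sub] at h3
      rcases abs_cases (d x mp - d x mq) with ⟨heq, _⟩ | ⟨heq, _⟩
      · rw [heq]; exact hc
      · rw [heq]; exact neg_mem hc
    apply Quot.sound
    show d p q ∈ Λ'
    have hb : d p q ≤ d p mp + (d mp mq + d mq q) :=
      le_trans (htri p mp q) (add_le_add_right (htri mp mq q) _)
    have hmqq : d mq q ∈ Λ' := by rwa [hsym mq q]
    refine habs_mem _ _ (add_mem hmp2 (add_mem hmm hmqq)) ?_
    rw [abs_of_nonneg (hpos p q)]
    exact hb
  have hTree₀ : IsLambdaTree d₀ := tree_of_ingredients hmet₀ hgeo₀ hmed₀ huniq₀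
  -- the action
  have hactR : ∀ g : G, ∀ a b : T, R a b → R (act g a) (act g b) := by
    intro g a b hab
    show d (act g a) (act g b) ∈ Λ'
    rw [hact_iso]
    exact hab
  refine ⟨d₀, hd₀, hTree₀, fun g => Quot.map (act g) (hactR g), fun g x => rfl, ?_, ?_⟩
  · intro g q q'
    induction q using Quot.ind with | _ x => ?_
    induction q' using Quot.ind with | _ y => ?_
    show d₀ (Quot.mk R (act g x)) (Quot.mk R (act g y)) = d₀ (Quot.mk R x) (Quot.mk R y)
    rw [hd₀, hd₀, hact_iso]
  · intro g
    obtain ⟨x, hx⟩ := (hℓ g).2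
    refine ⟨Quot.mk R x, ?_⟩
    show d₀ (Quot.mk R x) (Quot.mk R (act g x)) = 0
    rw [hd₀, hx, hπ_ker]
    exact hℓΛ' g
end
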